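/- For n ≥ 2 the Green's function G_n(t,s) of ∂_t² + 2 sech² t − n² satisfies the decay bound: for any 0 < γ < 1 and any f with |f(s)| ≤ M e^{γ|s|}, the solution u(t) = ∫_ℝ G_n(t,s)f(s)ds satisfies sup_t e^{−γ|t|}|u(t)| ≤ (C/n²) M, with C depending only on γ. -/

import Mathlib

open Real MeasureTheory

/-- The Green's function `G_n(t,s)` for `∂_t² + 2 sech² t − n²`, `n ≥ 2`. -/
noncomputable def greenGn (n : ℤ) (t s : ℝ) : ℝ :=
  if t ≤ s then
    (1 / (2 * (n : ℝ) * (1 - (n : ℝ) ^ 2))) * Real.exp ((n : ℝ) * (t - s))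
      * ((n : ℝ) + Real.tanh s) * ((n : ℝ) - Real.tanh t)
  else
    (1 / (2 * (n : ℝ) * (1 - (n : ℝ) ^ 2))) * Real.exp ((n : ℝ) * (s - t))
      * ((n : ℝ) - Real.tanh s) * ((n : ℝ) + Real.tanh t)

lemma myAbsTanhLeOne (x : ℝ) : |Real.tanh x| ≤ 1 := by
  have hc := Real.cosh_pos x
  rw [Real.tanh_eq_sinh_div_cosh, abs_div, abs_of_pos hc, div_le_one hc, abs_le]
  constructor
  · have := Real.sinh_lt_cosh (-x)
    rw [Real.sinh_neg, Real.cosh_neg] at this; linarith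
  · exact (Real.sinh_lt_cosh x).le

lemma myIntegralIoiExp {b : ℝ} (hb : 0 < b) :
    ∫ x in Set.Ioi (0 : ℝ), Real.exp (-(b * x)) = 1 / b := by
  have h := Real.integral_rpow_mul_exp_neg_mul_Ioi (a := 1) (r := b) one_pos hb
  simpa [Real.Gamma_one] using h

lemma myIntegrableExpNegAbs {b : ℝ} (hb : 0 < b) :
    Integrable (fun x : ℝ => Real.exp (-(b * |x|))) := by
  have hIoi : IntegrableOn (fun x : ℝ => Real.exp (-(b * |x|))) (Set.Ioi 0) := by
    have h0 : IntegrableOn (fun x : ℝ => Real.exp (-b * x)) (Set.Ioi 0) :=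
      exp_neg_integrableOn_Ioi 0 hb
    refine h0.congr_fun (fun x hx => ?_) measurableSet_Ioi
    rw [abs_of_pos hx]; simp only [neg_mul]
  have hIic : IntegrableOn (fun x : ℝ => Real.exp (-(b * |x|))) (Set.Iic 0) := by
    rw [← Measure.map_neg_eq_self (volume : Measure ℝ)]
    have m : MeasurableEmbedding fun x : ℝ => -x := (Homeomorph.neg ℝ).measurableEmbedding
    rw [m.integrableOn_map_iff]
    simp_rw [Function.comp_def, abs_neg, Set.neg_preimage, Set.neg_Iic, neg_zero]
    exact Iff.mpr integrableOn_Ici_iff_integrableOn_Ioi hIoi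
  have h := hIic.union hIoi
  rwa [Set.Iic_union_Ioi, integrableOn_univ] at h

lemma myIntegralExpNegAbs {b : ℝ} (hb : 0 < b) :
    ∫ x : ℝ, Real.exp (-(b * |x|)) = 2 / b := by
  rw [integral_comp_abs (f := fun y => Real.exp (-(b * y))), myIntegralIoiExp hb]
  ring

lemma myProdBound (N : ℝ) (hN : 2 ≤ N) (E A B : ℝ) (hE : 0 < E)
    (hA : |A| ≤ 1) (hB : |B| ≤ 1) :
    |1 / (2 * N * (1 - N ^ 2)) * E * (N + A) * (N - B)|
      ≤ ((N + 1) / (2 * N * (N - 1))) * E := by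
  rw [abs_le] at hA hB
  have k1 : |N + A| ≤ N + 1 := abs_le.mpr ⟨by linarith, by linarith⟩
  have k2 : |N - B| ≤ N + 1 := abs_le.mpr ⟨by linarith, by linarith⟩
  have hneg : 2 * N * (1 - N ^ 2) < 0 := by nlinarith
  have k0 : |1 / (2 * N * (1 - N ^ 2))| * (N + 1) * (N + 1)
      = (N + 1) / (2 * N * (N - 1)) := by
    rw [abs_of_neg (one_div_neg.mpr hneg)]
    have h1 : 2 * N * (1 - N ^ 2) ≠ 0 := ne_of_lt hneg
    have h2 : 2 * N * (N - 1) ≠ 0 := by nlinarith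
    rw [eq_div_iff h2, neg_mul, neg_mul, neg_mul, one_div, inv_mul_eq_div, div_mul_eq_mul_div,
      div_mul_eq_mul_div, neg_eq_iff_eq_neg, div_eq_iff h1]
    ring
  calc |1 / (2 * N * (1 - N ^ 2)) * E * (N + A) * (N - B)|
      = |1 / (2 * N * (1 - N ^ 2))| * |E| * |N + A| * |N - B| := by
        rw [abs_mul, abs_mul, abs_mul]
    _ = |1 / (2 * N * (1 - N ^ 2))| * E * |N + A| * |N - B| := by
        rw [abs_of_pos hE]
    _ ≤ |1 / (2 * N * (1 - N ^ 2))| * E * (N + 1) * (N + 1) := by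
        have hnn : (0:ℝ) ≤ |1 / (2 * N * (1 - N ^ 2))| * E := by positivity
        have s1 : |1 / (2 * N * (1 - N ^ 2))| * E * |N + A|
            ≤ |1 / (2 * N * (1 - N ^ 2))| * E * (N + 1) :=
          mul_le_mul_of_nonneg_left k1 hnn
        have hnn2 : (0:ℝ) ≤ |N - B| := abs_nonneg _
        calc |1 / (2 * N * (1 - N ^ 2))| * E * |N + A| * |N - B|
            ≤ |1 / (2 * N * (1 - N ^ 2))| * E * (N + 1) * |N - B| :=
              mul_le_mul_of_nonneg_right s1 hnn2
          _ ≤ |1 / (2 * N * (1 - N ^ 2))| * E * (N + 1) * (N + 1) := by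
              have : (0:ℝ) ≤ |1 / (2 * N * (1 - N ^ 2))| * E * (N + 1) := by
                have : (0:ℝ) ≤ N + 1 := by linarith
                positivity
              exact mul_le_mul_of_nonneg_left k2 this
    _ = (|1 / (2 * N * (1 - N ^ 2))| * (N + 1) * (N + 1)) * E := by ring
    _ = ((N + 1) / (2 * N * (N - 1))) * E := by rw [k0]

/-- Weighted decay estimate for the Green's function of `L − n²`: for
`0 < γ < 1` there is `C = C(γ)` so that if `|f(s)| ≤ M e^{γ|s|}`, then
`u(t) = ∫ G_n(t,s) f(s) ds` satisfies `sup_t e^{−γ|t|} |u(t)| ≤ (C/n²) M`. -/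
theorem greenGn_weighted_bound (γ : ℝ) (hγ0 : 0 < γ) (hγ1 : γ < 1) :
    ∃ C : ℝ, 0 < C ∧ ∀ (n : ℤ), 2 ≤ n → ∀ (M : ℝ) (f : ℝ → ℝ), Measurable f →
      (∀ s : ℝ, |f s| ≤ M * Real.exp (γ * |s|)) →
      ∀ t : ℝ, Real.exp (-(γ * |t|)) * |∫ s, greenGn n t s * f s|
        ≤ (C / (n : ℝ) ^ 2) * M := by
  refine ⟨6, by norm_num, ?_⟩
  intro n hn M f hf hbound t
  set N : ℝ := (n : ℝ) with hNdef
  have hN2 : (2:ℝ) ≤ N := by rw [hNdef]; exact_mod_cast hn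
  have hN0 : (0:ℝ) < N := by linarith
  have hM : 0 ≤ M := le_trans (abs_nonneg (f 0)) (by simpa using hbound 0)
  set K : ℝ := (N + 1) / (2 * N * (N - 1)) with hKdef
  have hK : 0 < K := by
    apply div_pos (by linarith)
    nlinarith
  set a : ℝ := N - γ with hadef
  have ha0 : 0 < a := by simp only [hadef]; linarith
  -- pointwise bound on the Green's function
  have hG : ∀ s, |greenGn n t s| ≤ K * Real.exp (-(N * |t - s|)) := by
    intro s
    unfold greenGn
    rw [← hNdef]
    split_ifs with h
    · have habs : |t - s| = s - t := by rw [abs_sub_comm]; exact abs_of_nonneg (by linarith)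
      have hexp : N * (t - s) = -(N * |t - s|) := by rw [habs]; ring
      rw [hexp]
      exact myProdBound N hN2 _ _ _ (Real.exp_pos _) (myAbsTanhLeOne s) (myAbsTanhLeOne t)
    · have habs : |t - s| = t - s := abs_of_nonneg (by linarith [not_le.mp h])
      have hexp : N * (s - t) = -(N * |t - s|) := by rw [habs]; ring
      rw [hexp]
      have := myProdBound N hN2 (Real.exp (-(N * |t - s|))) (-Real.tanh s) (-Real.tanh t)
        (Real.exp_pos _) (by rw [abs_neg]; exact myAbsTanhLeOne s)
        (by rw [abs_neg]; exact myAbsTanhLeOne t)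
      simpa [sub_neg_eq_add, ← sub_eq_add_neg] using this
  -- pointwise bound on the integrand
  have hpt : ∀ s, |greenGn n t s * f s|
      ≤ (K * M * Real.exp (γ * |t|)) * Real.exp (-(a * |t - s|)) := by
    intro s
    rw [abs_mul]
    have step1 : |greenGn n t s| * |f s|
        ≤ (K * Real.exp (-(N * |t - s|))) * (M * Real.exp (γ * |s|)) :=
      mul_le_mul (hG s) (hbound s) (abs_nonneg _)
        (mul_nonneg hK.le (Real.exp_pos _).le)
    refine step1.trans ?_
    have habs : |s| ≤ |t| + |t - s| := by
      have h1 := abs_sub_abs_le_abs_sub s t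
      rw [abs_sub_comm] at h1
      linarith
    have hexp : Real.exp (-(N * |t - s|)) * Real.exp (γ * |s|)
        ≤ Real.exp (γ * |t|) * Real.exp (-(a * |t - s|)) := by
      rw [← Real.exp_add, ← Real.exp_add]
      apply Real.exp_le_exp.mpr
      have h2 : γ * |s| ≤ γ * (|t| + |t - s|) := mul_le_mul_of_nonneg_left habs hγ0.le
      simp only [hadef]
      nlinarith [abs_nonneg (t - s)]
    calc K * Real.exp (-(N * |t - s|)) * (M * Real.exp (γ * |s|))
        = (K * M) * (Real.exp (-(N * |t - s|)) * Real.exp (γ * |s|)) := by ring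
      _ ≤ (K * M) * (Real.exp (γ * |t|) * Real.exp (-(a * |t - s|))) :=
          mul_le_mul_of_nonneg_left hexp (mul_nonneg hK.le hM)
      _ = (K * M * Real.exp (γ * |t|)) * Real.exp (-(a * |t - s|)) := by ring
  -- integrability of the dominating function
  have hint0 : Integrable (fun s : ℝ => Real.exp (-(a * |t - s|))) := by
    have h1 := (myIntegrableExpNegAbs ha0).comp_sub_right t
    refine h1.congr ?_
    filter_upwards with x
    rw [abs_sub_comm]
  have hint : Integrable (fun s : ℝ =>
      (K * M * Real.exp (γ * |t|)) * Real.exp (-(a * |t - s|))) := hint0.const_mul _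
  -- value of the dominating integral
  have hval : ∫ s : ℝ, Real.exp (-(a * |t - s|)) = 2 / a := by
    have heq : (fun s : ℝ => Real.exp (-(a * |t - s|)))
        = fun s : ℝ => (fun x : ℝ => Real.exp (-(a * |x|))) (s - t) := by
      funext s; rw [abs_sub_comm]
    rw [heq, integral_sub_right_eq_self (fun x : ℝ => Real.exp (-(a * |x|))) t,
      myIntegralExpNegAbs ha0]
  -- the main estimate
  have hu : |∫ s, greenGn n t s * f s| ≤ (K * M * Real.exp (γ * |t|)) * (2 / a) := by
    calc |∫ s, greenGn n t s * f s| ≤ ∫ s, |greenGn n t s * f s| := by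
          simpa only [Real.norm_eq_abs] using
            norm_integral_le_integral_norm (μ := volume) (fun s => greenGn n t s * f s)
      _ ≤ ∫ s, (K * M * Real.exp (γ * |t|)) * Real.exp (-(a * |t - s|)) :=
          integral_mono_of_nonneg (ae_of_all _ fun s => abs_nonneg _) hint
            (ae_of_all _ hpt)
      _ = (K * M * Real.exp (γ * |t|)) * (2 / a) := by
          rw [integral_const_mul, hval]
  have hKa : K * (2 / a) ≤ 6 / N ^ 2 := by
    have h1 : (0:ℝ) < 2 * N * (N - 1) := by nlinarith
    have h2 : (0:ℝ) < N ^ 2 := by positivity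
    rw [hKdef, div_mul_div_comm, div_le_div_iff₀ (by positivity) h2]
    have ha1 : N - 1 ≤ a := by simp only [hadef]; linarith
    nlinarith [mul_nonneg (mul_nonneg hN0.le (by linarith : (0:ℝ) ≤ 5 * N - 3))
        (by linarith : (0:ℝ) ≤ N - 2),
      mul_nonneg (mul_nonneg (by linarith : (0:ℝ) ≤ 12 * N) (by linarith : (0:ℝ) ≤ N - 1))
        (by linarith : (0:ℝ) ≤ a - (N - 1))]
  have hone : Real.exp (-(γ * |t|)) * Real.exp (γ * |t|) = 1 := by
    rw [← Real.exp_add]; simp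
  calc Real.exp (-(γ * |t|)) * |∫ s, greenGn n t s * f s|
      ≤ Real.exp (-(γ * |t|)) * ((K * M * Real.exp (γ * |t|)) * (2 / a)) :=
        mul_le_mul_of_nonneg_left hu (Real.exp_pos _).le
    _ = (K * (2 / a) * M) * (Real.exp (-(γ * |t|)) * Real.exp (γ * |t|)) := by ring
    _ = K * (2 / a) * M := by rw [hone, mul_one]
    _ ≤ (6 / N ^ 2) * M := mul_le_mul_of_nonneg_right hKa hM
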